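/- Let f = e^ψ be a symmetric, strictly log-convex, C^2 density on ℝ, set V(x) = ∫₀ˣ f, and suppose M > 1 is such that ψ'(x)² ≥ M·ψ''(x) for all sufficiently large x. Then limsup_{x→∞} V(x)·ψ'(x)/f(x) ≤ M/(M−1). -/

import Mathlib

open Filter

/-- Fundamental Bounding Lemma, upper bound: for `f = e^ψ` symmetric, strictly
log-convex and `C²`, with `V x = ∫₀ˣ f`, if `M > 1` satisfies `ψ'(x)² ≥ M ψ''(x)` for
all sufficiently large `x`, then `limsup_{x→∞} V(x) ψ'(x) / f(x) ≤ M / (M - 1)`. -/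
theorem fundamental_bounding_limsup (ψ : ℝ → ℝ) (hψ : ContDiff ℝ 2 ψ)
    (hψ_even : ∀ y, ψ (-y) = ψ y) (hψ_strict_convex : StrictConvexOn ℝ Set.univ ψ)
    (f : ℝ → ℝ) (hf : ∀ y, f y = Real.exp (ψ y))
    (V : ℝ → ℝ) (hV : ∀ x, V x = ∫ t in (0:ℝ)..x, f t)
    (M : ℝ) (hM : 1 < M)
    (hMψ : ∀ᶠ x in Filter.atTop, M * deriv (deriv ψ) x ≤ (deriv ψ x) ^ 2) :
    Filter.limsup (fun x => V x * deriv ψ x / f x) Filter.atTop ≤ M / (M - 1) := by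
  have hfe : f = fun y => Real.exp (ψ y) := funext hf
  subst hfe
  have hVe : V = fun x => ∫ t in (0:ℝ)..x, Real.exp (ψ t) := funext hV
  subst hVe
  -- basic differentiability
  have hψd : Differentiable ℝ ψ := hψ.differentiable (by norm_num)
  have hψ1 : ContDiff ℝ 1 (deriv ψ) := by
    have h2 : ContDiff ℝ (1 + 1 : ℕ) ψ := by exact_mod_cast hψ
    exact ((contDiff_succ_iff_deriv (n := 1)).mp (by exact_mod_cast h2)).2.2
  have hψ'd : Differentiable ℝ (deriv ψ) := hψ1.differentiable (by norm_num)
  -- deriv ψ 0 = 0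
  have hψ'0 : deriv ψ 0 = 0 := by
    have h1 : HasDerivAt (fun y => ψ (-y)) (deriv ψ (-0) * (-1)) 0 :=
      (hψd (-0)).hasDerivAt.comp 0 (hasDerivAt_neg 0)
    have h2 : (fun y => ψ (-y)) = ψ := funext hψ_even
    rw [h2, neg_zero] at h1
    have := (hψd 0).hasDerivAt.unique h1
    linarith
  -- strict monotonicity of deriv ψ
  have hmono : StrictMonoOn (deriv ψ) Set.univ :=
    hψ_strict_convex.strictMonoOn_deriv (fun x _ => (hψd x))
  obtain ⟨a₀, ha₀⟩ := eventually_atTop.mp hMψ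
  set a : ℝ := max a₀ 1 with ha_def
  have ha1 : (1:ℝ) ≤ a := le_max_right _ _
  have hapos : (0:ℝ) < a := by linarith
  have hψ'pos : ∀ x, a ≤ x → 0 < deriv ψ x := by
    intro x hx
    have := hmono (Set.mem_univ 0) (Set.mem_univ x) (by linarith)
    rwa [hψ'0] at this
  have hMa : ∀ x, a ≤ x → M * deriv (deriv ψ) x ≤ (deriv ψ x) ^ 2 := by
    intro x hx; exact ha₀ x (le_trans (le_max_left _ _) hx)
  set E : ℝ → ℝ := fun y => Real.exp (ψ y) with hE_def
  have hEpos : ∀ x, 0 < E x := fun x => Real.exp_pos _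
  have hEcont : Continuous E := Real.continuous_exp.comp hψ.continuous
  have hEd : ∀ x, HasDerivAt E (E x * deriv ψ x) x := fun x => (hψd x).hasDerivAt.exp
  set V : ℝ → ℝ := fun x => ∫ t in (0:ℝ)..x, E t with hV_def
  have hVd : ∀ x, HasDerivAt V (E x) x := fun x =>
    (hEcont.integral_hasStrictDerivAt 0 x).hasDerivAt
  have hVcont : Continuous V :=
    Differentiable.continuous (fun x => (hVd x).differentiableAt)
  set g : ℝ → ℝ := fun x => E x / deriv ψ x with hg_def
  have hgd : ∀ x, a ≤ x →
      HasDerivAt g ((E x * deriv ψ x * deriv ψ x - E x * deriv (deriv ψ) x)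
        / (deriv ψ x) ^ 2) x := by
    intro x hx
    exact (hEd x).div (hψ'd x).hasDerivAt (ne_of_gt (hψ'pos x hx))
  have hgpos : ∀ x, a ≤ x → 0 < g x := fun x hx => div_pos (hEpos x) (hψ'pos x hx)
  set c : ℝ := (M - 1) / M with hc_def
  have hMpos : (0:ℝ) < M := by linarith
  have hcpos : 0 < c := div_pos (by linarith) hMpos
  have hgderiv : ∀ x, a ≤ x →
      c * E x ≤ (E x * deriv ψ x * deriv ψ x - E x * deriv (deriv ψ) x)
        / (deriv ψ x) ^ 2 := by
    intro x hx
    have hp := hψ'pos x hx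
    have hp2 : 0 < (deriv ψ x) ^ 2 := by positivity
    have h1 := hMa x hx
    have h2 := hEpos x
    have h4 : c * (deriv ψ x) ^ 2 ≤ (deriv ψ x) ^ 2 - deriv (deriv ψ) x := by
      rw [hc_def, div_mul_eq_mul_div, div_le_iff₀ hMpos]
      nlinarith [h1]
    have h5 := mul_le_mul_of_nonneg_left h4 (le_of_lt h2)
    rw [le_div_iff₀ hp2]
    nlinarith [h5]
  -- ψ, hence E, is monotone on [a, ∞)
  have hψmono : MonotoneOn ψ (Set.Ici a) := by
    apply monotoneOn_of_deriv_nonneg (convex_Ici a) hψ.continuous.continuousOn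
      (fun x hx => (hψd x).differentiableWithinAt)
    intro x hx
    rw [interior_Ici] at hx
    exact le_of_lt (hψ'pos x (le_of_lt hx))
  have hgcont : ContinuousOn g (Set.Ici a) := by
    apply ContinuousOn.div hEcont.continuousOn (hψ'd.continuous.continuousOn)
    intro x hx; exact ne_of_gt (hψ'pos x hx)
  -- h := g - c * V is monotone on [a, ∞)
  have hh : MonotoneOn (fun x => g x - c * V x) (Set.Ici a) := by
    apply monotoneOn_of_deriv_nonneg (convex_Ici a)
      (hgcont.sub ((continuous_const.mul hVcont).continuousOn))
    · intro x hx
      rw [interior_Ici] at hx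
      exact (((hgd x (le_of_lt hx)).sub ((hVd x).const_mul c)).differentiableAt).differentiableWithinAt
    · intro x hx
      rw [interior_Ici] at hx
      change 0 ≤ deriv (g - fun y => c * V y) x
      rw [((hgd x (le_of_lt hx)).sub ((hVd x).const_mul c)).deriv, sub_nonneg]
      exact hgderiv x (le_of_lt hx)
  -- k := g - c * E a * x is monotone on [a, ∞)
  have hk : MonotoneOn (fun x => g x - c * E a * x) (Set.Ici a) := by
    apply monotoneOn_of_deriv_nonneg (convex_Ici a)
      (hgcont.sub ((continuous_const.mul continuous_id).continuousOn))
    · intro x hx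
      rw [interior_Ici] at hx
      exact (((hgd x (le_of_lt hx)).sub
        ((hasDerivAt_id x).const_mul (c * E a))).differentiableAt).differentiableWithinAt
    · intro x hx
      rw [interior_Ici] at hx
      change 0 ≤ deriv (g - fun y => c * E a * id y) x
      rw [((hgd x (le_of_lt hx)).sub ((hasDerivAt_id x).const_mul (c * E a))).deriv,
        sub_nonneg, mul_one]
      refine le_trans ?_ (hgderiv x (le_of_lt hx))
      have hEa : E a ≤ E x := Real.exp_le_exp.mpr
        (hψmono (Set.mem_Ici.mpr le_rfl) (Set.mem_Ici.mpr (le_of_lt hx)) (le_of_lt hx))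
      exact mul_le_mul_of_nonneg_left hEa (le_of_lt hcpos)
  -- g tends to infinity
  have hgtop : Tendsto g atTop atTop := by
    have haff : Tendsto (fun x => g a - c * E a * a + c * E a * x) atTop atTop := by
      apply tendsto_atTop_add_const_left
      exact Tendsto.const_mul_atTop (by positivity) tendsto_id
    apply tendsto_atTop_mono' atTop _ haff
    filter_upwards [eventually_ge_atTop a] with x hx
    have h6 : g a - c * E a * a ≤ g x - c * E a * x :=
      hk (Set.mem_Ici.mpr le_rfl) (Set.mem_Ici.mpr hx) hx
    linarith
  have hlim : Tendsto (fun x => V a / g x) atTop (nhds 0) :=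
    Tendsto.div_atTop tendsto_const_nhds hgtop
  -- key eventual bound
  have hkey : ∀ᶠ x in atTop, V x * deriv ψ x / E x ≤ V a / g x + M / (M - 1) := by
    filter_upwards [eventually_ge_atTop a] with x hx
    have hVx : V x ≤ V a + g x / c := by
      have h5 : g a - c * V a ≤ g x - c * V x :=
        hh (Set.mem_Ici.mpr le_rfl) (Set.mem_Ici.mpr hx) hx
      have hga : 0 < g a := hgpos a le_rfl
      rw [← sub_nonneg]
      have heq : V a + g x / c - V x = (c * V a + g x - c * V x) / c := by
        field_simp
      rw [heq]
      apply div_nonneg _ (le_of_lt hcpos)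
      linarith
    have hpx := hψ'pos x hx
    have hex := hEpos x
    have hgx := hgpos x hx
    have step1 : V x * deriv ψ x / E x ≤ (V a + g x / c) * deriv ψ x / E x := by
      gcongr
    refine le_trans step1 (le_of_eq ?_)
    have hgxe : g x = E x / deriv ψ x := rfl
    have hcinv : 1 / c = M / (M - 1) := by
      rw [hc_def]; rw [one_div_div]
    have hc0 : c ≠ 0 := ne_of_gt hcpos
    have hp0 : deriv ψ x ≠ 0 := ne_of_gt hpx
    have he0 : E x ≠ 0 := ne_of_gt hex
    rw [← hcinv, hgxe]
    field_simp
  -- conclude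
  have hcb : IsCoboundedUnder (· ≤ ·) atTop (fun x => V x * deriv ψ x / E x) := by
    apply isCoboundedUnder_le_of_eventually_le atTop (x := (0:ℝ))
    filter_upwards [eventually_ge_atTop a] with x hx
    have hV0 : 0 ≤ V x :=
      intervalIntegral.integral_nonneg (by linarith) (fun t _ => (hEpos t).le)
    exact div_nonneg (mul_nonneg hV0 (hψ'pos x hx).le) (hEpos x).le
  apply le_of_forall_pos_le_add
  intro ε hε
  apply Filter.limsup_le_of_le hcb
  filter_upwards [hkey, hlim.eventually (eventually_le_nhds hε)] with x h1 h2
  linarith
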